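/- arXiv:2205.02956 — 9 statements merged into one kernel-verified Lean document; each statement's English description precedes it below -/
import Mathlib

section
/- Let Q be a symmetric invertible d×d real matrix and let X, Y be d×n real matrices such that XᵀQX = YᵀQY. If X has rank d, then there exists an invertible d×d matrix U with UᵀQU = Q such that Y = UX. -/
open Matrix

theorem stmt0 (d n : ℕ) (Q : Matrix (Fin d) (Fin d) ℝ)
    (hQsymm : Qᵀ = Q) (hQinv : IsUnit Q)
    (X Y : Matrix (Fin d) (Fin n) ℝ)
    (hGram : Xᵀ * Q * X = Yᵀ * Q * Y)
    (hrank : X.rank = d) :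
    ∃ U : Matrix (Fin d) (Fin d) ℝ, IsUnit U ∧ Uᵀ * Q * U = Q ∧ Y = U * X := by
  classical
  -- X.mulVecLin is surjective
  have hXsurj : LinearMap.range X.mulVecLin = ⊤ := by
    apply Submodule.eq_top_of_finrank_eq
    rw [show Module.finrank ℝ (LinearMap.range X.mulVecLin) = X.rank from rfl, hrank,
      Module.finrank_fintype_fun_eq_card, Fintype.card_fin]
  -- obtain a right inverse matrix R
  obtain ⟨g, hg⟩ := X.mulVecLin.exists_rightInverse_of_surjective hXsurj
  set R : Matrix (Fin n) (Fin d) ℝ := LinearMap.toMatrix' g with hR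
  have hXR : X * R = 1 := by
    apply Matrix.toLin'.injective
    rw [Matrix.toLin'_mul, Matrix.toLin'_one, hR, Matrix.toLin'_toMatrix']
    exact hg
  -- Q expressed via Y
  have hQY : Rᵀ * (Yᵀ * Q * Y) * R = Q := by
    rw [← hGram]
    calc Rᵀ * (Xᵀ * Q * X) * R = (X * R)ᵀ * Q * (X * R) := by
          simp [Matrix.transpose_mul, Matrix.mul_assoc]
      _ = Q := by rw [hXR]; simp
  -- Y has rank d
  have hQrank : Q.rank = d := by
    rw [Q.rank_of_isUnit hQinv, Fintype.card_fin]
  have hYrank : Y.rank = d := by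
    refine le_antisymm (Y.rank_le_card_height.trans (by simp)) ?_
    have e1 : Rᵀ * ((Yᵀ * Q * Y) * R) = Q := by rw [← Matrix.mul_assoc]; exact hQY
    calc d = Q.rank := hQrank.symm
      _ = (Rᵀ * ((Yᵀ * Q * Y) * R)).rank := by rw [e1]
      _ ≤ ((Yᵀ * Q * Y) * R).rank := Matrix.rank_mul_le_right _ _
      _ ≤ (Yᵀ * Q * Y).rank := Matrix.rank_mul_le_left _ _
      _ = (Yᵀ * (Q * Y)).rank := by rw [Matrix.mul_assoc]
      _ ≤ (Q * Y).rank := Matrix.rank_mul_le_right _ _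
      _ ≤ Y.rank := Matrix.rank_mul_le_right _ _
  -- Yᵀ has trivial kernel
  have hYTker : LinearMap.ker (Yᵀ.mulVecLin) = ⊥ := by
    have h1 := LinearMap.finrank_range_add_finrank_ker (Yᵀ.mulVecLin)
    have h2 : Module.finrank ℝ (LinearMap.range Yᵀ.mulVecLin) = d := by
      rw [show Module.finrank ℝ (LinearMap.range Yᵀ.mulVecLin) = Yᵀ.rank from rfl,
        Y.rank_transpose, hYrank]
    rw [h2, Module.finrank_fintype_fun_eq_card, Fintype.card_fin] at h1
    exact Submodule.finrank_eq_zero.1 (by omega)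
  have hYTinj : ∀ v : Fin d → ℝ, Yᵀ *ᵥ v = 0 → v = 0 := by
    intro v hv
    exact (Matrix.ker_mulVecLin_eq_bot_iff.mp hYTker) v hv
  -- key: Y * (R * X) = Y
  have hkey : Y * (R * X) = Y := by
    have h3 : Yᵀ * (Q * (Y * (R * X))) = Yᵀ * (Q * Y) := by
      calc Yᵀ * (Q * (Y * (R * X))) = (Yᵀ * Q * Y) * R * X := by simp [Matrix.mul_assoc]
        _ = (Xᵀ * Q * X) * R * X := by rw [hGram]
        _ = Xᵀ * Q * ((X * R) * X) := by simp [Matrix.mul_assoc]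
        _ = Xᵀ * Q * X := by rw [hXR, Matrix.one_mul]
        _ = Yᵀ * Q * Y := hGram
        _ = Yᵀ * (Q * Y) := by rw [Matrix.mul_assoc]
    have hYQM : Yᵀ * (Q * (Y * (R * X) - Y)) = 0 := by
      rw [Matrix.mul_sub, Matrix.mul_sub, h3, sub_self]
    have hQM : Q * (Y * (R * X) - Y) = 0 := by
      ext i j
      have := congrFun (hYTinj (fun k => (Q * (Y * (R * X) - Y)) k j) ?_) i
      · simpa using this
      · ext i'
        simpa [Matrix.mulVec, Matrix.mul_apply, dotProduct] using
          congrFun (congrFun hYQM i') j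
    obtain ⟨u, hu⟩ := hQinv
    have h1 : (↑u⁻¹ : Matrix (Fin d) (Fin d) ℝ) * Q = 1 := by rw [← hu]; exact u.inv_mul
    have h2 := congrArg (fun M => (↑u⁻¹ : Matrix (Fin d) (Fin d) ℝ) * M) hQM
    simp only [← Matrix.mul_assoc, h1, Matrix.one_mul, Matrix.mul_zero] at h2
    have h4 := sub_eq_zero.mp h2
    rw [← Matrix.mul_assoc]
    exact h4
  -- conclude
  refine ⟨Y * R, ?_, ?_, ?_⟩
  · -- IsUnit
    have hU : (Y * R)ᵀ * Q * (Y * R) = Q := by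
      calc (Y * R)ᵀ * Q * (Y * R) = Rᵀ * (Yᵀ * Q * Y) * R := by
            simp [Matrix.transpose_mul, Matrix.mul_assoc]
        _ = Q := hQY
    rw [Matrix.isUnit_iff_isUnit_det]
    have hdet := congrArg Matrix.det hU
    rw [Matrix.det_mul, Matrix.det_mul, Matrix.det_transpose] at hdet
    have hQdet : Q.det ≠ 0 := ((Matrix.isUnit_iff_isUnit_det Q).mp hQinv).ne_zero
    have hsq : (Y * R).det * (Y * R).det = 1 := by
      apply mul_right_cancel₀ hQdet
      rw [one_mul]
      linear_combination hdet
    exact IsUnit.of_mul_eq_one _ hsq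
  · calc (Y * R)ᵀ * Q * (Y * R) = Rᵀ * (Yᵀ * Q * Y) * R := by
          simp [Matrix.transpose_mul, Matrix.mul_assoc]
      _ = Q := hQY
  · rw [Matrix.mul_assoc, hkey]
end

section
/- Let Q be a symmetric positive definite d×d real matrix and let X, Y be d×n real matrices such that XᵀQX = YᵀQY. Then there exists an invertible d×d matrix U with UᵀQU = Q such that Y = UX. -/
open Matrix

noncomputable section

variable {d n : ℕ}

-- key lemma: equal Gram (identity) matrices implies related by orthogonal matrix
lemma gram_orth (A B : Matrix (Fin d) (Fin n) ℝ) (h : Aᵀ * A = Bᵀ * B) :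
    ∃ O : Matrix (Fin d) (Fin d) ℝ, Oᵀ * O = 1 ∧ B = O * A := by
  set V := EuclideanSpace ℝ (Fin d)
  set W := EuclideanSpace ℝ (Fin n)
  set fA : W →ₗ[ℝ] V := Matrix.toEuclideanLin A with hfA
  set fB : W →ₗ[ℝ] V := Matrix.toEuclideanLin B with hfB
  have key : ∀ v w : W, inner ℝ (fA v) (fA w) = (inner ℝ (fB v) (fB w) : ℝ) := by
    intro v w
    have hdot : ∀ (M : Matrix (Fin d) (Fin n) ℝ) (v w : W),
        (inner ℝ (Matrix.toEuclideanLin M v) (Matrix.toEuclideanLin M w) : ℝ)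
          = ((WithLp.equiv 2 _ v) ᵥ* (Mᵀ * M)) ⬝ᵥ (WithLp.equiv 2 _ w) := by
      intro M v w
      simp only [Matrix.toEuclideanLin_apply, PiLp.inner_apply, RCLike.inner_apply,
        starRingEnd_apply, star_trivial]
      show (M *ᵥ _) ⬝ᵥ (M *ᵥ _) = _
      rw [dotProduct_comm, dotProduct_mulVec, vecMul_mulVec]
      rfl
    rw [hfA, hfB, hdot, hdot, h]
  have hnorm : ∀ v : W, ‖fA v‖ = ‖fB v‖ := by
    intro v
    have := key v v
    rw [real_inner_self_eq_norm_sq, real_inner_self_eq_norm_sq] at this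
    nlinarith [norm_nonneg (fA v), norm_nonneg (fB v)]
  have hker : LinearMap.ker fA ≤ LinearMap.ker fB := by
    intro v hv
    simp only [LinearMap.mem_ker] at hv ⊢
    have := hnorm v
    rw [hv, norm_zero] at this
    exact norm_eq_zero.mp this.symm
  -- the linear map on the range of fA sending fA v to fB v
  set g : (LinearMap.range fA) →ₗ[ℝ] V :=
    (LinearMap.ker fA).liftQ fB hker ∘ₗ fA.quotKerEquivRange.symm.toLinearMap with hg
  have hgapp : ∀ v : W, g ⟨fA v, LinearMap.mem_range_self fA v⟩ = fB v := by
    intro v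
    have h1 : fA.quotKerEquivRange.symm ⟨fA v, LinearMap.mem_range_self fA v⟩
        = Submodule.Quotient.mk v := fA.quotKerEquivRange_symm_apply_image v _
    simp [hg, h1]
  -- as a linear isometry
  set φ : (LinearMap.range fA) →ₗᵢ[ℝ] V :=
    ⟨g, by
      rintro ⟨x, v, rfl⟩
      rw [hgapp v]
      simpa using (hnorm v).symm⟩ with hφ
  -- extend to a linear isometry of the whole space
  set O' : V →ₗᵢ[ℝ] V := φ.extend with hO'def
  have hO' : ∀ v : W, O' (fA v) = fB v := by
    intro v
    have := φ.extend_apply ⟨fA v, LinearMap.mem_range_self fA v⟩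
    rw [hO'def]
    rw [show fA v = ((⟨fA v, LinearMap.mem_range_self fA v⟩ : LinearMap.range fA) : V) from rfl,
      this]
    exact hgapp v
  -- extract the matrix
  set eL : V ≃ₗ[ℝ] (Fin d → ℝ) := WithLp.linearEquiv 2 ℝ (Fin d → ℝ) with heL
  set M : Matrix (Fin d) (Fin d) ℝ :=
    LinearMap.toMatrix' (eL.toLinearMap ∘ₗ O'.toLinearMap ∘ₗ eL.symm.toLinearMap) with hMdef
  have hM : ∀ y : Fin d → ℝ, M *ᵥ y = eL (O' (eL.symm y)) := by
    intro y
    rw [← Matrix.toLin'_apply, hMdef, Matrix.toLin'_toMatrix']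
    rfl
  have heq : ∀ a b : V, (WithLp.equiv 2 (Fin d → ℝ)) a ⬝ᵥ (WithLp.equiv 2 (Fin d → ℝ)) b
      = (inner ℝ a b : ℝ) := by
    intro a b
    rw [PiLp.inner_apply]
    simp only [RCLike.inner_apply, starRingEnd_apply, star_trivial]
    rw [dotProduct_comm]
    rfl
  have hinner : ∀ x y : Fin d → ℝ, (M *ᵥ x) ⬝ᵥ (M *ᵥ y) = x ⬝ᵥ y := by
    intro x y
    rw [hM, hM]
    rw [show (eL (O' (eL.symm x))) = (WithLp.equiv 2 (Fin d → ℝ)) (O' (eL.symm x)) from rfl,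
      show (eL (O' (eL.symm y))) = (WithLp.equiv 2 (Fin d → ℝ)) (O' (eL.symm y)) from rfl,
      heq, O'.inner_map_map, ← heq]
    rfl
  refine ⟨M, ?_, ?_⟩
  · ext i j
    have h2 := hinner (Pi.single i 1) (Pi.single j 1)
    rw [dotProduct_mulVec, vecMul_mulVec] at h2
    simpa [single_one_vecMul, dotProduct_single, single_dotProduct, Matrix.one_apply, Pi.single_apply, eq_comm (a := i)] using h2
  · have hcol : ∀ x : Fin n → ℝ, B *ᵥ x = (M * A) *ᵥ x := by
      intro x
      have h3 := hO' ((WithLp.equiv 2 (Fin n → ℝ)).symm x)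
      rw [hfA, hfB, Matrix.toEuclideanLin_apply, Matrix.toEuclideanLin_apply] at h3
      change O' ((WithLp.equiv 2 (Fin d → ℝ)).symm (A *ᵥ x)) = (WithLp.equiv 2 (Fin d → ℝ)).symm (B *ᵥ x) at h3
      rw [← mulVec_mulVec, hM]
      have h4 : eL.symm (A *ᵥ x) = (WithLp.equiv 2 (Fin d → ℝ)).symm (A *ᵥ x) := rfl
      rw [h4, h3]
      rfl
    ext i j
    have h5 := congrFun (hcol (Pi.single j 1)) i
    simpa [mulVec_single] using h5


end

theorem stmt1 (d n : ℕ) (Q : Matrix (Fin d) (Fin d) ℝ)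
    (hQ : Q.PosDef)
    (X Y : Matrix (Fin d) (Fin n) ℝ)
    (hGram : Xᵀ * Q * X = Yᵀ * Q * Y) :
    ∃ U : Matrix (Fin d) (Fin d) ℝ, IsUnit U ∧ Uᵀ * Q * U = Q ∧ Y = U * X := by
  classical
  obtain ⟨S, hSS, hST⟩ : ∃ S : Matrix (Fin d) (Fin d) ℝ, S * S = Q ∧ Sᵀ = S := by
    open scoped MatrixOrder in
    (refine ⟨CFC.sqrt Q, CFC.sqrt_mul_sqrt_self Q hQ.posSemidef.nonneg, ?_⟩
     have := (CFC.sqrt_nonneg Q).posSemidef.1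
     simpa [Matrix.IsHermitian, Matrix.conjTranspose_eq_transpose_of_trivial] using this)
  have hdetQ : IsUnit Q.det := (Matrix.isUnit_iff_isUnit_det Q).mp hQ.isUnit
  have hdetS : IsUnit S.det := by
    have : S.det * S.det = Q.det := by rw [← Matrix.det_mul, hSS]
    exact isUnit_of_mul_isUnit_left (this ▸ hdetQ)
  have haux : ∀ Z : Matrix (Fin d) (Fin n) ℝ, (S * Z)ᵀ * (S * Z) = Zᵀ * Q * Z := by
    intro Z
    rw [Matrix.transpose_mul, hST, Matrix.mul_assoc, ← Matrix.mul_assoc S, hSS,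
      ← Matrix.mul_assoc]
  have hgram' : (S * X)ᵀ * (S * X) = (S * Y)ᵀ * (S * Y) := by
    rw [haux, haux, hGram]
  obtain ⟨O, hO, hOSA⟩ := gram_orth (S * X) (S * Y) hgram'
  have hdetO : IsUnit O.det := by
    have : Oᵀ.det * O.det = 1 := by rw [← Matrix.det_mul, hO, Matrix.det_one]
    rw [Matrix.det_transpose] at this
    exact IsUnit.of_mul_eq_one _ this
  refine ⟨S⁻¹ * O * S, ?_, ?_, ?_⟩
  · rw [Matrix.isUnit_iff_isUnit_det, Matrix.det_mul, Matrix.det_mul, Matrix.det_nonsing_inv]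
    exact ((isUnit_ringInverse.mpr hdetS).mul hdetO).mul hdetS
  · rw [Matrix.transpose_mul, Matrix.transpose_mul, Matrix.transpose_nonsing_inv, hST]
    rw [← hSS]
    calc S * (Oᵀ * S⁻¹) * (S * S) * (S⁻¹ * O * S)
        = S * Oᵀ * (S⁻¹ * S) * ((S * S⁻¹) * (O * S)) := by
          simp only [Matrix.mul_assoc]
      _ = S * (Oᵀ * O) * S := by
          rw [Matrix.nonsing_inv_mul _ hdetS, Matrix.mul_nonsing_inv _ hdetS]
          simp only [Matrix.mul_one, Matrix.one_mul, Matrix.mul_assoc]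
      _ = S * S := by rw [hO, Matrix.mul_one]
  · have h6 := congrArg (fun Z => S⁻¹ * Z) hOSA
    rw [← Matrix.mul_assoc, Matrix.nonsing_inv_mul _ hdetS, Matrix.one_mul] at h6
    rw [h6]
    simp only [Matrix.mul_assoc]
end

section
/- For d > 2, every linear SO(d)-equivariant map L: ℝ^{d×n} → ℝ^d (where SO(d) acts on ℝ^{d×n} by left multiplication and on ℝ^d by matrix-vector multiplication) is of the form L(X) = Xw for some fixed vector w ∈ ℝ^n. -/
open Matrix Equiv

lemma permT (d : ℕ) (σ : Equiv.Perm (Fin d)) : (σ.permMatrix ℝ)ᵀ * (σ.permMatrix ℝ) = 1 := by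
  ext a b
  simp only [Matrix.mul_apply, Matrix.transpose_apply, Equiv.Perm.permMatrix,
    PEquiv.toMatrix_apply, Equiv.toPEquiv_apply, Matrix.one_apply, Option.mem_def,
    Option.some.injEq]
  rw [Finset.sum_eq_single (σ.symm a)]
  · by_cases h : a = b <;> simp [h, ← σ.eq_symm_apply]
  · intro k _ hk
    have : ¬ σ k = a := fun hc => hk (by simpa [← σ.eq_symm_apply] using hc)
    simp [this]
  · simp

lemma signdiag (d : ℕ) (s : Fin d → ℝ) (hs : ∀ x, s x = 1 ∨ s x = -1) :
    (diagonal s)ᵀ * (diagonal s) = 1 := by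
  rw [Matrix.diagonal_transpose, Matrix.diagonal_mul_diagonal]
  have h : (fun i => s i * s i) = fun _ => (1:ℝ) := by
    funext x
    rcases hs x with h | h <;> simp [h]
  rw [h, Matrix.diagonal_one]

lemma mulE (d n : ℕ) (R : Matrix (Fin d) (Fin d) ℝ) (c : Fin d) (j : Fin n) :
    R * Matrix.single c j (1:ℝ) = ∑ k, R k c • Matrix.single k j 1 := by
  ext a b
  simp only [Matrix.mul_apply, Matrix.sum_apply, Pi.smul_apply, Matrix.smul_apply,
    Matrix.single, Matrix.of_apply, smul_eq_mul]
  by_cases hb : j = b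
  · subst hb
    rw [Finset.sum_eq_single c, Finset.sum_eq_single a] <;> simp +contextual [eq_comm]
  · simp [hb]

theorem stmt3 (d n : ℕ) (hd : 2 < d)
    (L : Matrix (Fin d) (Fin n) ℝ →ₗ[ℝ] (Fin d → ℝ))
    (hequiv : ∀ R : Matrix (Fin d) (Fin d) ℝ, Rᵀ * R = 1 → R.det = 1 →
      ∀ X : Matrix (Fin d) (Fin n) ℝ, L (R * X) = R.mulVec (L X)) :
    ∃ w : Fin n → ℝ, ∀ X : Matrix (Fin d) (Fin n) ℝ, L X = X.mulVec w := by
  have hd0 : 0 < d := by omega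
  set g : Fin n → Fin d → (Fin d → ℝ) := fun j c => L (Matrix.single c j 1) with hg
  have hgdef : ∀ (j : Fin n) (c : Fin d), L (Matrix.single c j 1) = g j c := fun _ _ => rfl
  -- key commutation identity
  have key : ∀ R : Matrix (Fin d) (Fin d) ℝ, Rᵀ * R = 1 → R.det = 1 →
      ∀ (j : Fin n) (c r : Fin d),
      (∑ k, R k c * g j k r) = ∑ k, R r k * g j c k := by
    intro R hR hdet j c r
    have h2 := hequiv R hR hdet (Matrix.single c j 1)
    rw [mulE] at h2
    have h3 : L (∑ k, R k c • Matrix.single k j (1:ℝ)) = ∑ k, R k c • g j k := by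
      rw [map_sum]
      refine Finset.sum_congr rfl fun k _ => ?_
      rw [_root_.map_smul, hgdef]
    rw [h3] at h2
    have := congrFun h2 r
    simpa [Matrix.mulVec, dotProduct, Finset.sum_apply, hgdef] using this
  -- off-diagonal vanishing
  have offdiag : ∀ (j : Fin n) (c r : Fin d), r ≠ c → g j c r = 0 := by
    intro j c r hrc
    obtain ⟨k₀, hk₀⟩ : ∃ k₀ : Fin d, k₀ ∉ ({r, c} : Finset (Fin d)) := by
      by_contra h
      push_neg at h
      have hsub : (Finset.univ : Finset (Fin d)) ⊆ {r, c} := fun x _ => h x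
      have := Finset.card_le_card hsub
      simp only [Finset.card_univ, Fintype.card_fin] at this
      have h2 := Finset.card_insert_le r ({c} : Finset (Fin d))
      simp at h2
      omega
    simp only [Finset.mem_insert, Finset.mem_singleton, not_or] at hk₀
    obtain ⟨hk₀r, hk₀c⟩ := hk₀
    set s : Fin d → ℝ := Function.update (Function.update (1 : Fin d → ℝ) c (-1)) k₀ (-1)
      with hs
    have hsval : ∀ x, s x = 1 ∨ s x = -1 := by
      intro x
      simp only [hs, Function.update]
      split_ifs <;> simp
    have hsc : s c = -1 := by simp [hs, Function.update, hk₀c, (Ne.symm hk₀c)]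
    have hsr : s r = 1 := by
      simp [hs, Function.update, (Ne.symm hk₀r), hrc]
    have horth := signdiag d s hsval
    have hdet : (diagonal s).det = 1 := by
      rw [Matrix.det_diagonal, hs]
      rw [Finset.prod_update_of_mem (Finset.mem_univ k₀)]
      rw [Finset.prod_update_of_mem
        (by simp [Ne.symm hk₀c] : c ∈ Finset.univ \ {k₀})]
      simp
    have hk := key (diagonal s) horth hdet j c r
    have hL : (∑ k, (diagonal s) k c * g j k r) = s c * g j c r := by
      rw [Finset.sum_eq_single c]
      · simp
      · intro k _ hkc; rw [Matrix.diagonal_apply_ne _ hkc, zero_mul]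
      · simp
    have hR : (∑ k, (diagonal s) r k * g j c k) = s r * g j c r := by
      rw [Finset.sum_eq_single r]
      · simp
      · intro k _ hkr; rw [Matrix.diagonal_apply_ne _ (Ne.symm hkr), zero_mul]
      · simp
    rw [hL, hR, hsc, hsr] at hk
    linarith
  -- diagonal constancy
  have diag : ∀ (j : Fin n) (i i' : Fin d), g j i i = g j i' i' := by
    intro j i i'
    by_cases hii : i = i'
    · rw [hii]
    · set σ : Equiv.Perm (Fin d) := Equiv.swap i i' with hσ
      set s : Fin d → ℝ := Function.update (1 : Fin d → ℝ) i (-1) with hs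
      set G : Matrix (Fin d) (Fin d) ℝ := (σ.permMatrix ℝ) * diagonal s with hG
      have hsval : ∀ x, s x = 1 ∨ s x = -1 := by
        intro x
        simp only [hs, Function.update]
        split_ifs <;> simp
      have horth : Gᵀ * G = 1 := by
        rw [hG, Matrix.transpose_mul, Matrix.mul_assoc, ← Matrix.mul_assoc (σ.permMatrix ℝ)ᵀ,
          permT, Matrix.one_mul, signdiag d s hsval]
      have hdet : G.det = 1 := by
        rw [hG, Matrix.det_mul, Matrix.det_permutation, Matrix.det_diagonal, hs,
          Equiv.Perm.sign_swap hii]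
        rw [Finset.prod_update_of_mem (Finset.mem_univ i)]
        simp
      have hGapp : ∀ a b, G a b = (if σ a = b then 1 else 0) * s b := by
        intro a b
        rw [hG, Matrix.mul_diagonal]
        congr 1
        simp [Equiv.Perm.permMatrix, PEquiv.toMatrix_apply, Equiv.toPEquiv_apply]
      have hk := key G horth hdet j i i'
      have hLs : (∑ k, G k i * g j k i') = - g j i' i' := by
        rw [Finset.sum_eq_single i']
        · rw [hGapp]
          simp [hσ, Equiv.swap_apply_right, hs, Function.update]
        · intro k _ hki'
          rw [hGapp]
          have : σ k ≠ i := fun h =>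
            hki' (σ.injective (by rw [h, hσ, Equiv.swap_apply_right]))
          simp [this]
        · simp
      have hRs : (∑ k, G i' k * g j i k) = - g j i i := by
        rw [Finset.sum_eq_single i]
        · rw [hGapp]
          simp [hσ, Equiv.swap_apply_right, hs, Function.update]
        · intro k _ hki
          rw [hGapp]
          have : σ i' ≠ k := by rw [hσ, Equiv.swap_apply_right]; exact Ne.symm hki
          simp [this]
        · simp
      rw [hLs, hRs] at hk
      linarith
  -- conclude
  refine ⟨fun j => g j ⟨0, hd0⟩ ⟨0, hd0⟩, fun X => ?_⟩
  have hX : X = ∑ i, ∑ j, X i j • Matrix.single i j (1:ℝ) := by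
    conv_lhs => rw [matrix_eq_sum_single X]
    congr 1; funext i; congr 1; funext j
    ext a b
    simp [Matrix.single, mul_comm]
  funext r
  conv_lhs => rw [hX]
  rw [map_sum]
  simp only [map_sum, _root_.map_smul, hgdef, Finset.sum_apply, Pi.smul_apply, smul_eq_mul]
  rw [Finset.sum_eq_single r]
  · rw [Matrix.mulVec, dotProduct]
    refine Finset.sum_congr rfl fun j _ => ?_
    rw [diag j r ⟨0, hd0⟩]
  · intro i _ hir
    refine Finset.sum_eq_zero fun j _ => ?_
    rw [offdiag j i r (Ne.symm hir), mul_zero]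
  · simp
end

section
/- Let n ≥ d and let X, Y ∈ ℝ^{d×n} both have rank d. If for every choice of indices 1 ≤ i₁ < i₂ < ... < i_d ≤ n the determinants det(x_{i₁},...,x_{i_d}) and det(y_{i₁},...,y_{i_d}) of the corresponding d columns agree, then there exists A ∈ ℝ^{d×d} with det(A) = 1 such that Y = AX. -/
open Matrix

theorem stmt5 (d n : ℕ) (hdn : d ≤ n)
    (X Y : Matrix (Fin d) (Fin n) ℝ)
    (hX : X.rank = d) (hY : Y.rank = d)
    (hminors : ∀ g : Fin d → Fin n, StrictMono g →
      (X.submatrix id g).det = (Y.submatrix id g).det) :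
    ∃ A : Matrix (Fin d) (Fin d) ℝ, A.det = 1 ∧ Y = A * X := by
  classical
  -- Step 1: minors agree for arbitrary index functions
  have hminors' : ∀ h : Fin d → Fin n,
      (X.submatrix id h).det = (Y.submatrix id h).det := by
    intro h
    by_cases hinj : Function.Injective h
    · set σ := Tuple.sort h with hσ
      have hmono : Monotone (h ∘ σ) := Tuple.monotone_sort h
      have hsm : StrictMono (h ∘ σ) :=
        hmono.strictMono_of_injective (hinj.comp σ.injective)
      have key := hminors (h ∘ σ) hsm
      have eX : X.submatrix id (h ∘ σ) = (X.submatrix id h).submatrix id σ := rfl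
      have eY : Y.submatrix id (h ∘ σ) = (Y.submatrix id h).submatrix id σ := rfl
      rw [eX, eY, Matrix.det_permute', Matrix.det_permute'] at key
      have hs : ((Equiv.Perm.sign σ : ℤ) : ℝ) ≠ 0 := by
        rcases Int.units_eq_one_or (Equiv.Perm.sign σ) with h1 | h1 <;> simp [h1]
      exact mul_left_cancel₀ hs key
    · obtain ⟨i, j, hij, hne⟩ : ∃ i j, h i = h j ∧ i ≠ j := by
        simp only [Function.Injective, not_forall] at hinj
        obtain ⟨i, j, hij, hne⟩ := hinj
        exact ⟨i, j, hij, hne⟩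
      rw [Matrix.det_zero_of_column_eq hne (fun k => by simp [hij]),
        Matrix.det_zero_of_column_eq hne (fun k => by simp [hij])]
  -- Step 2: find a strictly monotone g with nonzero minor, from rank X = d
  have hspan : Submodule.span ℝ (Set.range Xᵀ) = ⊤ := by
    apply Submodule.eq_top_of_finrank_eq
    rw [show Set.range Xᵀ = Set.range X.col from rfl, ← Matrix.rank_eq_finrank_span_cols, hX]
    simp
  obtain ⟨b, hbsub, hbspan, hbli⟩ := exists_linearIndependent ℝ (Set.range Xᵀ)
  rw [hspan] at hbspan
  have hBasis : Module.Basis b ℝ (Fin d → ℝ) :=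
    Module.Basis.mk hbli (by rw [Subtype.range_coe, hbspan])
  have : Fintype b := FiniteDimensional.fintypeBasisIndex hBasis
  have hcard : Fintype.card b = d := by
    have := Module.finrank_eq_card_basis hBasis
    simp only [Module.finrank_fin_fun] at this
    omega
  obtain ⟨e⟩ : Nonempty (Fin d ≃ b) :=
    ⟨(Fintype.equivFinOfCardEq hcard).symm⟩
  have hchoice : ∀ x : b, ∃ j : Fin n, Xᵀ j = (x : Fin d → ℝ) :=
    fun x => hbsub x.2
  choose f hf using hchoice
  set g0 : Fin d → Fin n := fun i => f (e i) with hg0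
  have hvg0 : ∀ i, Xᵀ (g0 i) = ((e i : b) : Fin d → ℝ) := fun i => hf (e i)
  have hg0inj : Function.Injective g0 := by
    intro i j hijeq
    have : ((e i : b) : Fin d → ℝ) = ((e j : b) : Fin d → ℝ) := by
      rw [← hvg0 i, ← hvg0 j, hijeq]
    exact e.injective (Subtype.ext this)
  have hM : IsUnit (X.submatrix id g0) := by
    rw [← Matrix.linearIndependent_cols_iff_isUnit]
    have : (fun i => (X.submatrix id g0)ᵀ i) = (fun x : b => (x : Fin d → ℝ)) ∘ e := by
      funext i
      ext k
      exact congrFun (hvg0 i) k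
    rw [show (X.submatrix id g0).col = (fun i => (X.submatrix id g0)ᵀ i) from rfl, this]
    exact hbli.comp e e.injective
  have hMdet : (X.submatrix id g0).det ≠ 0 := by
    simpa [Matrix.isUnit_iff_isUnit_det, isUnit_iff_ne_zero] using hM
  -- sort g0
  set σ := Tuple.sort g0 with hσ
  have hgmono : Monotone (g0 ∘ σ) := Tuple.monotone_sort g0
  set g : Fin d → Fin n := g0 ∘ σ with hg
  have hgsm : StrictMono g := hgmono.strictMono_of_injective (hg0inj.comp σ.injective)
  set B := X.submatrix id g with hB
  set C := Y.submatrix id g with hC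
  have hBdet : B.det ≠ 0 := by
    have eX : B = (X.submatrix id g0).submatrix id σ := rfl
    rw [eX, Matrix.det_permute']
    have hs : ((Equiv.Perm.sign σ : ℤ) : ℝ) ≠ 0 := by
      rcases Int.units_eq_one_or (Equiv.Perm.sign σ) with h1 | h1 <;> simp [h1]
    exact mul_ne_zero hs hMdet
  have hdetBC : B.det = C.det := hminors g hgsm
  have hCdet : C.det ≠ 0 := hdetBC ▸ hBdet
  have hBunit : IsUnit B.det := isUnit_iff_ne_zero.mpr hBdet
  have hCunit : IsUnit C.det := isUnit_iff_ne_zero.mpr hCdet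
  refine ⟨C * B⁻¹, ?_, ?_⟩
  · rw [Matrix.det_mul, Matrix.det_nonsing_inv, ← hdetBC, Ring.inverse_eq_inv]
    field_simp
  · -- column-wise equality via Cramer's rule
    have hcramer : ∀ j : Fin n, ∀ i : Fin d,
        Matrix.cramer B (fun k => X k j) i = Matrix.cramer C (fun k => Y k j) i := by
      intro j i
      rw [Matrix.cramer_apply, Matrix.cramer_apply]
      have eB : Matrix.updateCol B i (fun k => X k j)
          = X.submatrix id (Function.update g i j) := by
        ext k l
        rw [Matrix.updateCol_apply]
        by_cases hl : l = i <;> simp [hl, Function.update, hB]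
      have eC : Matrix.updateCol C i (fun k => Y k j)
          = Y.submatrix id (Function.update g i j) := by
        ext k l
        rw [Matrix.updateCol_apply]
        by_cases hl : l = i <;> simp [hl, Function.update, hC]
      rw [eB, eC]
      exact hminors' (Function.update g i j)
    have hcolumns : ∀ j : Fin n,
        B⁻¹ *ᵥ (fun k => X k j) = C⁻¹ *ᵥ (fun k => Y k j) := by
      intro j
      rw [Matrix.inv_def, Matrix.inv_def, Matrix.smul_mulVec,
        Matrix.smul_mulVec, ← Matrix.cramer_eq_adjugate_mulVec,
        ← Matrix.cramer_eq_adjugate_mulVec, hdetBC]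
      congr 1
      funext i
      exact hcramer j i
    ext i j
    have : (fun k => Y k j) = (C * B⁻¹) *ᵥ (fun k => X k j) := by
      rw [← Matrix.mulVec_mulVec, hcolumns j, Matrix.mulVec_mulVec,
        Matrix.mul_nonsing_inv C hCunit, Matrix.one_mulVec]
    have h2 := congrFun this i
    rw [h2]
    simp [Matrix.mul_apply, Matrix.mulVec, dotProduct]
end

section
/- Let X, Y ∈ ℝ^{d×n} with n ≥ d, and suppose ‖Xw‖² + det(XW) = ‖Yw‖² + det(YW) for all w ∈ ℝ^n and all W ∈ ℝ^{n×d}. Then there exists R ∈ SO(d) such that Y = RX. -/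
open Matrix

noncomputable section

lemma aux_exists_orth (d n : ℕ) (X Y : Matrix (Fin d) (Fin n) ℝ)
    (hnorm : ∀ w, ∑ i, (X.mulVec w i) ^ 2 = ∑ i, (Y.mulVec w i) ^ 2) :
    ∃ R : Matrix (Fin d) (Fin d) ℝ, Rᵀ * R = 1 ∧ Y = R * X := by
  classical
  let e : (Fin d → ℝ) ≃ₗ[ℝ] EuclideanSpace ℝ (Fin d) := (WithLp.linearEquiv 2 ℝ (Fin d → ℝ)).symm
  let fX : (Fin n → ℝ) →ₗ[ℝ] EuclideanSpace ℝ (Fin d) := e.toLinearMap ∘ₗ X.mulVecLin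
  let fY : (Fin n → ℝ) →ₗ[ℝ] EuclideanSpace ℝ (Fin d) := e.toLinearMap ∘ₗ Y.mulVecLin
  have hfX : ∀ w, fX w = e (X *ᵥ w) := fun w => rfl
  have hfY : ∀ w, fY w = e (Y *ᵥ w) := fun w => rfl
  have hn : ∀ w, ‖fX w‖ = ‖fY w‖ := by
    intro w
    rw [EuclideanSpace.norm_eq, EuclideanSpace.norm_eq]
    congr 1
    simp only [Real.norm_eq_abs, sq_abs]
    exact hnorm w
  have hker : LinearMap.ker fX ≤ LinearMap.ker fY := by
    intro w hw
    rw [LinearMap.mem_ker] at hw ⊢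
    have := hn w
    rw [hw, norm_zero] at this
    exact (norm_eq_zero.mp this.symm)
  let g : LinearMap.range fX →ₗ[ℝ] EuclideanSpace ℝ (Fin d) :=
    ((LinearMap.ker fX).liftQ fY hker) ∘ₗ fX.quotKerEquivRange.symm.toLinearMap
  have hg : ∀ w, g ⟨fX w, LinearMap.mem_range_self _ w⟩ = fY w := by
    intro w
    have h1 : fX.quotKerEquivRange.symm ⟨fX w, LinearMap.mem_range_self _ w⟩
        = Submodule.Quotient.mk w := by
      rw [LinearEquiv.symm_apply_eq]
      exact Subtype.ext (LinearMap.quotKerEquivRange_apply_mk fX w).symm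
    simp only [g, LinearMap.coe_comp, Function.comp_apply, LinearEquiv.coe_toLinearMap, h1,
      Submodule.liftQ_apply]
  let L : LinearMap.range fX →ₗᵢ[ℝ] EuclideanSpace ℝ (Fin d) :=
    { toLinearMap := g
      norm_map' := by
        rintro ⟨x, w, rfl⟩
        rw [hg w]
        exact (hn w).symm }
  let T := L.extend
  have hT : ∀ w, T (fX w) = fY w := by
    intro w
    have := L.extend_apply ⟨fX w, LinearMap.mem_range_self _ w⟩
    rw [show ((⟨fX w, LinearMap.mem_range_self _ w⟩ : LinearMap.range fX) : EuclideanSpace ℝ (Fin d)) = fX w from rfl]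
      at this
    rw [this]
    exact hg w
  let R : Matrix (Fin d) (Fin d) ℝ :=
    LinearMap.toMatrix' (e.symm.toLinearMap ∘ₗ (T.toLinearMap ∘ₗ e.toLinearMap))
  have hmul : ∀ v, R *ᵥ v = e.symm (T (e v)) := by
    intro v
    rw [← Matrix.toLin'_apply, Matrix.toLin'_toMatrix']
    rfl
  have hYX : Y = R * X := by
    have key : ∀ w, (R * X) *ᵥ w = Y *ᵥ w := by
      intro w
      rw [← mulVec_mulVec, hmul]
      have : e (X *ᵥ w) = fX w := rfl
      rw [this, hT w, hfY w, LinearEquiv.symm_apply_apply]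
    ext i j
    have := congrFun (key (Pi.single j 1)) i
    simpa using this.symm
  refine ⟨R, ?_, hYX⟩
  ext i j
  have hinner := T.inner_map_map (e (Pi.single i 1)) (e (Pi.single j 1))
  have hTi : ∀ k (l : Fin d), (T (e (Pi.single k 1)) : Fin d → ℝ) l = R l k := by
    intro k l
    have := congrFun (hmul (Pi.single k 1)) l
    simp only [mulVec_single_one, Matrix.col_apply] at this
    exact this.symm
  have hL : (Rᵀ * R) i j = ∑ k, R k i * R k j := by
    simp [Matrix.mul_apply, Matrix.transpose_apply]
  rw [hL]
  have hIP : ∀ (x y : EuclideanSpace ℝ (Fin d)), (inner ℝ x y : ℝ) = ∑ k, x k * y k := by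
    intro x y
    rw [PiLp.inner_apply]
    simp [RCLike.inner_apply, mul_comm]
  rw [hIP, hIP] at hinner
  simp only [hTi] at hinner
  rw [hinner]
  have : ∀ k, (e (Pi.single i 1) : Fin d → ℝ) k * (e (Pi.single j 1) : Fin d → ℝ) k
      = (if k = i then 1 else 0) * (if k = j then 1 else 0) := by
    intro k
    have hi : (e (Pi.single i 1) : Fin d → ℝ) k = if k = i then 1 else 0 := by
      show (Pi.single i 1 : Fin d → ℝ) k = _
      rw [Pi.single_apply]
    have hj : (e (Pi.single j 1) : Fin d → ℝ) k = if k = j then 1 else 0 := by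
      show (Pi.single j 1 : Fin d → ℝ) k = _
      rw [Pi.single_apply]
    rw [hi, hj]
  simp only [this]
  rw [Matrix.one_apply]
  by_cases hij : i = j
  · subst hij; simp
  · rw [if_neg hij, Finset.sum_eq_zero]
    intro k _
    by_cases h1 : k = i
    · subst h1; simp [hij]
    · simp [h1]

end

open Matrix

theorem stmt8 (d n : ℕ) (hdn : d ≤ n) (X Y : Matrix (Fin d) (Fin n) ℝ)
    (h : ∀ (w : Fin n → ℝ) (W : Matrix (Fin n) (Fin d) ℝ),
      (∑ i, (X.mulVec w i) ^ 2) + (X * W).det = (∑ i, (Y.mulVec w i) ^ 2) + (Y * W).det) :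
    ∃ R : Matrix (Fin d) (Fin d) ℝ, Rᵀ * R = 1 ∧ R.det = 1 ∧ Y = R * X := by
  classical
  have hnorm : ∀ w, ∑ i, (X.mulVec w i) ^ 2 = ∑ i, (Y.mulVec w i) ^ 2 := by
    intro w
    have := h w 0
    rwa [Matrix.mul_zero, Matrix.mul_zero, add_left_inj] at this
  have hdet : ∀ W : Matrix (Fin n) (Fin d) ℝ, (X * W).det = (Y * W).det := by
    intro W
    have := h 0 W
    simpa [Matrix.mulVec_zero] using this
  obtain ⟨R₀, hR₀o, hR₀⟩ := aux_exists_orth d n X Y hnorm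
  have hdet2 : R₀.det = 1 ∨ R₀.det = -1 := by
    have h2 : R₀.det * R₀.det = 1 := by
      have := congrArg Matrix.det hR₀o
      rwa [Matrix.det_mul, Matrix.det_transpose, Matrix.det_one] at this
    exact mul_self_eq_one_iff.mp h2
  rcases hdet2 with h1 | hm1
  · exact ⟨R₀, hR₀o, h1, hR₀⟩
  by_cases hsurj : Function.Surjective X.mulVecLin
  · exfalso
    obtain ⟨g, hgc⟩ :=
      X.mulVecLin.exists_rightInverse_of_surjective (LinearMap.range_eq_top.mpr hsurj)
    set W := LinearMap.toMatrix' g with hW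
    have key : ∀ v, (X * W) *ᵥ v = v := by
      intro v
      rw [← mulVec_mulVec]
      have hWv : W *ᵥ v = g v := by
        rw [hW, ← Matrix.toLin'_apply, Matrix.toLin'_toMatrix']
      rw [hWv]
      exact LinearMap.ext_iff.mp hgc v
    have hXW : X * W = 1 := by
      ext i j
      have h2 := congrFun (key (Pi.single j 1)) i
      simp only [mulVec_single_one, Matrix.col_apply] at h2
      rw [h2, Matrix.one_apply, Pi.single_apply]
    have hdW := hdet W
    rw [hXW, Matrix.det_one, hR₀, Matrix.mul_assoc, hXW, Matrix.mul_one, hm1] at hdW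
    norm_num at hdW
  · -- non-surjective case: find unit vector orthogonal to the range of Y
    have hrX : X.rank < d := by
      have hne : LinearMap.range X.mulVecLin ≠ ⊤ := by
        rwa [ne_eq, LinearMap.range_eq_top]
      have := Submodule.finrank_lt (K := ℝ) (V := Fin d → ℝ) hne
      rwa [Module.finrank_fin_fun] at this
    have hrY : Yᵀ.rank < d := by
      rw [Matrix.rank_transpose]
      calc Y.rank = (R₀ * X).rank := by rw [hR₀]
        _ ≤ X.rank := Matrix.rank_mul_le_right _ _
        _ < d := hrX
    have hker : LinearMap.ker (Yᵀ.mulVecLin) ≠ ⊥ := by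
      intro hbot
      have hrn := LinearMap.finrank_range_add_finrank_ker (Yᵀ.mulVecLin)
      rw [hbot, finrank_bot, add_zero, Module.finrank_fin_fun] at hrn
      exact absurd hrn (Nat.ne_of_lt hrY)
    obtain ⟨u₀, hu₀mem, hu₀ne⟩ := (LinearMap.ker (Yᵀ.mulVecLin)).ne_bot_iff.mp hker
    have hu₀ : u₀ ᵥ* Y = 0 := by
      have : Yᵀ *ᵥ u₀ = 0 := hu₀mem
      rwa [Matrix.mulVec_transpose] at this
    have hd0 : (0:ℝ) < u₀ ⬝ᵥ u₀ := by
      rcases lt_or_eq_of_le (Finset.sum_nonneg fun i _ => mul_self_nonneg (u₀ i)) with hlt | heq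
      · exact hlt
      · exact absurd (dotProduct_self_eq_zero.mp heq.symm) hu₀ne
    set s : ℝ := Real.sqrt (u₀ ⬝ᵥ u₀) with hs
    have hspos : 0 < s := Real.sqrt_pos.mpr hd0
    set u : Fin d → ℝ := s⁻¹ • u₀ with hu
    have huu : u ⬝ᵥ u = 1 := by
      rw [hu, smul_dotProduct, dotProduct_smul, smul_eq_mul, smul_eq_mul, ← mul_assoc,
        ← mul_inv, Real.mul_self_sqrt hd0.le]
      exact inv_mul_cancel₀ hd0.ne'
    have huY : u ᵥ* Y = 0 := by
      rw [hu, Matrix.smul_vecMul, hu₀, smul_zero]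
    set A : Matrix (Fin d) (Fin d) ℝ := vecMulVec u u with hA
    have hAA : A * A = A := by
      ext i j
      rw [Matrix.mul_apply]
      simp only [hA, vecMulVec_apply]
      calc ∑ k, u i * u k * (u k * u j) = (u i * u j) * ∑ k, u k * u k := by
            rw [Finset.mul_sum]; exact Finset.sum_congr rfl fun k _ => by ring
        _ = u i * u j := by rw [show ∑ k, u k * u k = u ⬝ᵥ u from rfl, huu, mul_one]
    have hAY : A * Y = 0 := by
      ext i j
      rw [Matrix.mul_apply]
      simp only [hA, vecMulVec_apply]
      calc ∑ k, u i * u k * Y k j = u i * ∑ k, u k * Y k j := by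
            rw [Finset.mul_sum]; exact Finset.sum_congr rfl fun k _ => by ring
        _ = 0 := by
            rw [show ∑ k, u k * Y k j = (u ᵥ* Y) j from rfl, huY]
            simp
    have hAt : Aᵀ = A := by
      ext i j
      simp only [Matrix.transpose_apply, hA, vecMulVec_apply]
      ring
    set F : Matrix (Fin d) (Fin d) ℝ := 1 - (2:ℝ) • A with hF
    have hFt : Fᵀ = F := by
      rw [hF, Matrix.transpose_sub, Matrix.transpose_one, Matrix.transpose_smul, hAt]
    have hFF : F * F = 1 := by
      rw [hF]
      simp only [Matrix.sub_mul, Matrix.mul_sub, Matrix.one_mul, Matrix.mul_one,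
        Matrix.smul_mul, Matrix.mul_smul, hAA, smul_smul]

      module
    have hFY : F * Y = Y := by
      rw [hF, Matrix.sub_mul, Matrix.one_mul, Matrix.smul_mul, hAY, smul_zero, sub_zero]
    have hFdet : F.det = -1 := by
      have hform : F = 1 + Matrix.replicateCol Unit ((-2:ℝ) • u) * Matrix.replicateRow Unit u := by
        rw [← Matrix.vecMulVec_eq, hF, hA]
        ext i j
        simp only [Matrix.add_apply, Matrix.sub_apply, Matrix.smul_apply, vecMulVec_apply,
          Pi.smul_apply, smul_eq_mul]
        ring
      rw [hform, Matrix.det_one_add_replicateCol_mul_replicateRow, dotProduct_smul, huu]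
      norm_num
    refine ⟨F * R₀, ?_, ?_, ?_⟩
    · rw [Matrix.transpose_mul, hFt, Matrix.mul_assoc, ← Matrix.mul_assoc F F R₀, hFF,
        Matrix.one_mul, hR₀o]
    · rw [Matrix.det_mul, hFdet, hm1]; norm_num
    · rw [Matrix.mul_assoc, ← hR₀, hFY]
end

section
/- Let n ≥ d and let X, Y ∈ ℝ^{d×n} with X of rank d. If det²(XW)/det(XXᵀ) = det²(YW)/det(YYᵀ) for all W ∈ ℝ^{n×d} (where Y is also assumed to have rank d so both denominators are nonzero), then there exists an invertible matrix A ∈ GL(d, ℝ) such that Y = AX. -/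
open Matrix

private lemma isUnit_of_rank_eq_card {d : ℕ} (S : Matrix (Fin d) (Fin d) ℝ)
    (hS : S.rank = d) : IsUnit S := by
  rw [← Matrix.mulVec_surjective_iff_isUnit]
  have hr : LinearMap.range S.mulVecLin = ⊤ := by
    apply Submodule.eq_top_of_finrank_eq
    rw [Matrix.rank] at hS
    simp [hS]
  intro v
  obtain ⟨w, hw⟩ := LinearMap.range_eq_top.mp hr v
  exact ⟨w, hw⟩

theorem stmt10 (d n : ℕ) (hdn : d ≤ n)
    (X Y : Matrix (Fin d) (Fin n) ℝ)
    (hX : X.rank = d) (hY : Y.rank = d)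
    (h : ∀ W : Matrix (Fin n) (Fin d) ℝ,
      (X * W).det ^ 2 / (X * Xᵀ).det = (Y * W).det ^ 2 / (Y * Yᵀ).det) :
    ∃ A : Matrix (Fin d) (Fin d) ℝ, IsUnit A ∧ Y = A * X := by
  have hXXt : IsUnit (X * Xᵀ) := by
    apply isUnit_of_rank_eq_card
    rw [Matrix.rank_self_mul_transpose, hX]
  have hYYt : IsUnit (Y * Yᵀ) := by
    apply isUnit_of_rank_eq_card
    rw [Matrix.rank_self_mul_transpose, hY]
  have gd : (X * Xᵀ).det ≠ 0 :=
    isUnit_iff_ne_zero.mp ((Matrix.isUnit_iff_isUnit_det _).mp hXXt)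
  have yd : (Y * Yᵀ).det ≠ 0 :=
    isUnit_iff_ne_zero.mp ((Matrix.isUnit_iff_isUnit_det _).mp hYYt)
  have h2 : (X * Xᵀ).det ^ 2 / (X * Xᵀ).det = (X * Xᵀ).det := by
    rw [sq, mul_div_assoc, div_self gd, mul_one]
  set B : Matrix (Fin d) (Fin d) ℝ := Y * Xᵀ with hB
  have hBdet : B.det ≠ 0 := by
    have h1 := h Xᵀ
    rw [← hB, h2, eq_div_iff yd] at h1
    intro hz
    rw [hz] at h1
    simp only [ne_eq, OfNat.ofNat_ne_zero, not_false_eq_true, zero_pow] at h1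
    rcases mul_eq_zero.mp h1 with h3 | h3
    · exact gd h3
    · exact yd h3
  set P : Matrix (Fin n) (Fin n) ℝ := 1 - Xᵀ * (X * Xᵀ)⁻¹ * X with hP
  have hXXtinv : (X * Xᵀ) * (X * Xᵀ)⁻¹ = 1 := Matrix.mul_nonsing_inv _ (isUnit_iff_ne_zero.mpr gd)
  have hXP : X * P = 0 := by
    rw [hP, Matrix.mul_sub, Matrix.mul_one]
    have h4 : X * (Xᵀ * (X * Xᵀ)⁻¹ * X) = ((X * Xᵀ) * (X * Xᵀ)⁻¹) * X := by
      simp only [Matrix.mul_assoc]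
    rw [h4, hXXtinv, Matrix.one_mul, sub_self]
  -- key: det (B + Y * P * N) = det B for every N
  have key : ∀ N : Matrix (Fin n) (Fin d) ℝ, (B + Y * P * N).det = B.det := by
    intro N
    set C' : Matrix (Fin d) (Fin d) ℝ := Y * P * N with hC'
    have hconst : ∀ t : ℝ, (B + t • C').det ^ 2 = (X * Xᵀ).det * (Y * Yᵀ).det := by
      intro t
      have h1 := h (Xᵀ + t • (P * N))
      have hXW : X * (Xᵀ + t • (P * N)) = X * Xᵀ := by
        rw [Matrix.mul_add, Matrix.mul_smul, ← Matrix.mul_assoc, hXP,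
          Matrix.zero_mul, smul_zero, add_zero]
      have hYW : Y * (Xᵀ + t • (P * N)) = B + t • C' := by
        rw [Matrix.mul_add, Matrix.mul_smul, ← Matrix.mul_assoc, hB, hC']
      rw [hXW, hYW, h2, eq_div_iff yd] at h1
      linarith [h1]
    set p : Polynomial ℝ :=
      (B.map Polynomial.C + (Polynomial.X : Polynomial ℝ) • C'.map Polynomial.C).det with hp
    have heval : ∀ t : ℝ, p.eval t = (B + t • C').det := by
      intro t
      have h5 := (Polynomial.evalRingHom t).map_det
        (B.map Polynomial.C + (Polynomial.X : Polynomial ℝ) • C'.map Polynomial.C)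
      rw [hp, ← Polynomial.coe_evalRingHom, h5]
      congr 1
      ext i j
      simp only [RingHom.mapMatrix_apply, Matrix.map_apply, Matrix.add_apply,
        Matrix.smul_apply, smul_eq_mul, Polynomial.coe_evalRingHom, Polynomial.eval_add,
        Polynomial.eval_mul, Polynomial.eval_C, Polynomial.eval_X]
    have hp2 : p ^ 2 = Polynomial.C ((X * Xᵀ).det * (Y * Yᵀ).det) := by
      apply Polynomial.funext
      intro t
      simp [heval t, hconst t]
    have hpne : p ≠ 0 := by
      intro hz
      have h6 := heval 0
      rw [hz] at h6
      simp at h6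
      exact hBdet h6.symm
    have hdeg : p.natDegree = 0 := by
      have h4 := congrArg Polynomial.natDegree hp2
      rw [Polynomial.natDegree_pow, Polynomial.natDegree_C] at h4
      omega
    obtain ⟨a, ha⟩ := Polynomial.natDegree_eq_zero.mp hdeg
    have e0 := heval 0
    have e1 := heval 1
    rw [← ha] at e0 e1
    simp at e0 e1
    exact e1.symm.trans e0
  have hBinv : B * B⁻¹ = 1 := Matrix.mul_nonsing_inv _ (isUnit_iff_ne_zero.mpr hBdet)
  set M : Matrix (Fin d) (Fin n) ℝ := B⁻¹ * (Y * P) with hM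
  have key2 : ∀ N : Matrix (Fin n) (Fin d) ℝ,
      ((1 : Matrix (Fin d) (Fin d) ℝ) + M * N).det = 1 := by
    intro N
    have hfac : B + Y * P * N = B * (1 + M * N) := by
      rw [Matrix.mul_add, Matrix.mul_one, hM]
      have h7 : B * (B⁻¹ * (Y * P) * N) = (B * B⁻¹) * (Y * P * N) := by
        simp only [Matrix.mul_assoc]
      rw [h7, hBinv, Matrix.one_mul]
    have h8 := key N
    rw [hfac, Matrix.det_mul] at h8
    exact mul_left_cancel₀ hBdet (h8.trans (mul_one B.det).symm)
  have hM0 : M = 0 := by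
    ext i j
    have h5 := key2 (Matrix.single j i (1 : ℝ))
    have h6 : (1 : Matrix (Fin d) (Fin d) ℝ) + M * Matrix.single j i (1 : ℝ) =
        Matrix.updateCol 1 i (fun a => (1 : Matrix (Fin d) (Fin d) ℝ) a i + M a j) := by
      ext a b
      by_cases hbi : b = i
      · subst hbi
        simp [Matrix.updateCol_apply, Matrix.mul_apply, Matrix.single,
          Matrix.add_apply]
      · simp [Matrix.updateCol_apply, hbi, Matrix.mul_apply, Matrix.single,
          Matrix.add_apply, Ne.symm hbi]
    rw [h6, ← Matrix.cramer_apply, Matrix.cramer_one] at h5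
    simp [Matrix.one_apply] at h5
    simpa using h5
  have hYP : Y * P = 0 := by
    have h9 : Y * P = B * M := by
      rw [hM, ← Matrix.mul_assoc, hBinv, Matrix.one_mul]
    rw [h9, hM0, Matrix.mul_zero]
  have hYeq : Y = (B * (X * Xᵀ)⁻¹) * X := by
    have h7 : Y * P = Y - (B * (X * Xᵀ)⁻¹) * X := by
      rw [hP, Matrix.mul_sub, Matrix.mul_one, hB]
      simp only [Matrix.mul_assoc]
    rw [hYP] at h7
    exact sub_eq_zero.mp h7.symm
  refine ⟨B * (X * Xᵀ)⁻¹, ?_, hYeq⟩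
  rw [Matrix.isUnit_iff_isUnit_det, Matrix.det_mul, Matrix.det_nonsing_inv]
  apply IsUnit.mul (isUnit_iff_ne_zero.mpr hBdet)
  simpa using isUnit_iff_ne_zero.mpr gd
end

section
/- Let A, B be symmetric n×n real matrices (n > 2) with zero diagonal and nonnegative entries. Suppose: (i) all sums of distinct subsets of the strictly-below-diagonal entries of A are pairwise distinct; (ii) the multiset of row sums of A equals the multiset of row sums of B; (iii) the multiset of above-diagonal entries {A_{ij} : i < j} equals the multiset {B_{ij} : i < j}. Then there exists a permutation matrix P such that B = P A Pᵀ. -/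
open Matrix

theorem stmt15 (n : ℕ) (hn : 2 < n)
    (A B : Matrix (Fin n) (Fin n) ℝ)
    (hAsymm : Aᵀ = A) (hBsymm : Bᵀ = B)
    (hAdiag : ∀ i, A i i = 0) (hBdiag : ∀ i, B i i = 0)
    (hApos : ∀ i j, 0 ≤ A i j) (hBpos : ∀ i j, 0 ≤ B i j)
    (hgeneric : ∀ S T : Finset (Fin n × Fin n),
      (∀ p ∈ S, p.2 < p.1) → (∀ p ∈ T, p.2 < p.1) →
      ∑ p ∈ S, A p.1 p.2 = ∑ p ∈ T, A p.1 p.2 → S = T)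
    (hrows : Multiset.map (fun i => ∑ j, A i j) Finset.univ.val =
      Multiset.map (fun i => ∑ j, B i j) Finset.univ.val)
    (hentries : Multiset.map (fun p : Fin n × Fin n => A p.1 p.2)
        (Finset.univ.filter (fun p : Fin n × Fin n => p.1 < p.2)).val =
      Multiset.map (fun p : Fin n × Fin n => B p.1 p.2)
        (Finset.univ.filter (fun p : Fin n × Fin n => p.1 < p.2)).val) :
    ∃ σ : Equiv.Perm (Fin n),
      B = (σ.permMatrix ℝ) * A * (σ.permMatrix ℝ)ᵀ := by
  classical
  have hAs : ∀ a b, A a b = A b a := fun a b => by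
    conv_lhs => rw [← hAsymm, Matrix.transpose_apply]
  have hBs : ∀ a b, B a b = B b a := fun a b => by
    conv_lhs => rw [← hBsymm, Matrix.transpose_apply]
  set U : Finset (Fin n × Fin n) :=
    Finset.univ.filter (fun p : Fin n × Fin n => p.1 < p.2) with hU
  have hUmem : ∀ p : Fin n × Fin n, p ∈ U ↔ p.1 < p.2 := by
    intro p; simp [hU]
  -- above-diagonal version of genericity
  have hgen : ∀ S T : Finset (Fin n × Fin n),
      (∀ p ∈ S, p.1 < p.2) → (∀ p ∈ T, p.1 < p.2) →
      ∑ p ∈ S, A p.1 p.2 = ∑ p ∈ T, A p.1 p.2 → S = T := by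
    intro S T hS hT hsum
    have hswap : ∀ (S : Finset (Fin n × Fin n)),
        ∑ p ∈ S.image Prod.swap, A p.1 p.2 = ∑ p ∈ S, A p.1 p.2 := by
      intro S
      rw [Finset.sum_image (fun x _ y _ h => Prod.swap_injective h)]
      exact Finset.sum_congr rfl (fun p _ => hAs _ _)
    have h := hgeneric (S.image Prod.swap) (T.image Prod.swap)
      (by rintro p hp; rcases Finset.mem_image.1 hp with ⟨q, hq, rfl⟩
          exact hS q hq)
      (by rintro p hp; rcases Finset.mem_image.1 hp with ⟨q, hq, rfl⟩
          exact hT q hq)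
      (by rw [hswap, hswap, hsum])
    exact Finset.image_injective Prod.swap_injective h
  -- entries of A above the diagonal are pairwise distinct
  have hAinj : ∀ p ∈ U, ∀ q ∈ U, A p.1 p.2 = A q.1 q.2 → p = q := by
    intro p hp q hq h
    have := hgen {p} {q} (by simpa using (hUmem p).1 hp)
      (by simpa using (hUmem q).1 hq) (by simpa using h)
    simpa using this
  have hAnodup : (U.val.map (fun p : Fin n × Fin n => A p.1 p.2)).Nodup :=
    (Multiset.nodup_map_iff_inj_on U.nodup).2
      (fun p hp q hq => hAinj p hp q hq)
  have hBnodup : (U.val.map (fun p : Fin n × Fin n => B p.1 p.2)).Nodup := by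
    rw [← hentries]; exact hAnodup
  have hBinj : ∀ p ∈ U, ∀ q ∈ U, B p.1 p.2 = B q.1 q.2 → p = q :=
    fun p hp q hq h => Multiset.inj_on_of_nodup_map hBnodup p hp q hq h
  -- the value-matching map ψ from B-edges to A-edges
  have hex : ∀ p ∈ U, ∃ q, q ∈ U ∧ A q.1 q.2 = B p.1 p.2 := by
    intro p hp
    have : B p.1 p.2 ∈ U.val.map (fun p : Fin n × Fin n => B p.1 p.2) :=
      Multiset.mem_map_of_mem _ hp
    rw [← hentries] at this
    rcases Multiset.mem_map.1 this with ⟨q, hq, hqv⟩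
    exact ⟨q, hq, hqv⟩
  choose φ hφU hφA using hex
  set ψ : Fin n × Fin n → Fin n × Fin n :=
    fun p => if h : p ∈ U then φ p h else p with hψ
  have hψU : ∀ p ∈ U, ψ p ∈ U := by
    intro p hp; rw [hψ]; dsimp only; rw [dif_pos hp]; exact hφU p hp
  have hψA : ∀ p ∈ U, A (ψ p).1 (ψ p).2 = B p.1 p.2 := by
    intro p hp; rw [hψ]; dsimp only; rw [dif_pos hp]; exact hφA p hp
  have hψinj : ∀ p ∈ U, ∀ q ∈ U, ψ p = ψ q → p = q := by
    intro p hp q hq h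
    apply hBinj p hp q hq
    rw [← hψA p hp, ← hψA q hq, h]
  -- edge sets incident to a vertex
  set E : Fin n → Finset (Fin n × Fin n) :=
    fun i => U.filter (fun p => p.1 = i ∨ p.2 = i) with hE
  have hEmem : ∀ i p, p ∈ E i ↔ (p.1 < p.2 ∧ (p.1 = i ∨ p.2 = i)) := by
    intro i p; simp [hE, hUmem, Finset.mem_filter, and_comm]
  -- row sums as sums over incident edges
  have hrow : ∀ (M : Matrix (Fin n) (Fin n) ℝ), (∀ a b, M a b = M b a) →
      (∀ a, M a a = 0) → ∀ i, ∑ j, M i j = ∑ p ∈ E i, M p.1 p.2 := by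
    intro M hMs hMd i
    rw [← Finset.sum_erase Finset.univ (hMd i)]
    refine Finset.sum_bij' (i := fun j _ => if i < j then (i, j) else (j, i))
      (j := fun p _ => if p.1 = i then p.2 else p.1) ?_ ?_ ?_ ?_ ?_
    · intro j hj
      have hji : j ≠ i := Finset.ne_of_mem_erase hj
      rcases lt_or_gt_of_ne hji with h | h
      · rw [if_neg (not_lt.2 h.le)]
        exact (hEmem i _).2 ⟨h, Or.inr rfl⟩
      · rw [if_pos h]
        exact (hEmem i _).2 ⟨h, Or.inl rfl⟩
    · intro p hp
      rcases (hEmem i p).1 hp with ⟨hlt, hor⟩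
      rcases eq_or_ne p.1 i with h1 | h1
      · rw [if_pos h1]
        exact Finset.mem_erase.2 ⟨by rw [← h1]; exact hlt.ne', Finset.mem_univ _⟩
      · rw [if_neg h1]
        exact Finset.mem_erase.2 ⟨h1, Finset.mem_univ _⟩
    · intro j hj
      have hji : j ≠ i := Finset.ne_of_mem_erase hj
      rcases lt_or_gt_of_ne hji with h | h
      · rw [if_neg (not_lt.2 h.le)]; simp [hji]
      · rw [if_pos h]; simp
    · intro p hp
      rcases (hEmem i p).1 hp with ⟨hlt, hor⟩
      rcases eq_or_ne p.1 i with h1 | h1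
      · rw [if_pos h1, if_pos (h1 ▸ hlt)]
        exact Prod.ext h1.symm rfl
      · have h2 : p.2 = i := hor.resolve_left h1
        rw [if_neg h1, if_neg (not_lt.2 (h2 ▸ hlt).le)]
        exact Prod.ext rfl h2.symm
    · intro j hj
      have hji : j ≠ i := Finset.ne_of_mem_erase hj
      rcases lt_or_gt_of_ne hji with h | h
      · rw [if_neg (not_lt.2 h.le)]; exact hMs i j
      · rw [if_pos h]
  have hrowA : ∀ i, ∑ j, A i j = ∑ p ∈ E i, A p.1 p.2 := hrow A hAs hAdiag
  have hrowB : ∀ i, ∑ j, B i j = ∑ p ∈ E i, B p.1 p.2 := hrow B hBs hBdiag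
  -- E determines the vertex
  have hEinj : ∀ i k : Fin n, E i = E k → i = k := by
    intro i k hik
    by_contra hne
    obtain ⟨x, hxi, hxk⟩ : ∃ x : Fin n, x ≠ i ∧ x ≠ k := by
      by_contra h; push_neg at h
      have hsub : (Finset.univ : Finset (Fin n)) ⊆ {i, k} := by
        intro x _
        rcases eq_or_ne x i with rfl | hxi
        · simp
        · simp [h x hxi]
      have h1 := Finset.card_le_card hsub
      have h2 : ({i, k} : Finset (Fin n)).card ≤ 2 :=
        (Finset.card_insert_le _ _).trans (by simp)
      simp [Finset.card_univ] at h1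
      omega
    set p : Fin n × Fin n := if i < x then (i, x) else (x, i) with hp
    have hpi : p ∈ E i := by
      rcases lt_or_gt_of_ne (Ne.symm hxi) with h | h
      · rw [hp, if_pos h]; exact (hEmem i _).2 ⟨h, Or.inl rfl⟩
      · rw [hp, if_neg (not_lt.2 h.le)]; exact (hEmem i _).2 ⟨h, Or.inr rfl⟩
    have hpk : p ∉ E k := by
      intro hmem
      have hor := ((hEmem k p).1 hmem).2
      rw [hp] at hor
      split_ifs at hor with h
      · rcases hor with h' | h'
        exacts [hne h', hxk h']
      · rcases hor with h' | h'
        exacts [hxk h', hne h']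
    exact hpk (hik ▸ hpi)
  -- row sums of A are injective
  have hrAinj : Function.Injective (fun i => ∑ j, A i j) := by
    intro i k h
    simp only [hrowA] at h
    exact hEinj i k (hgen _ _ (fun p hp => ((hEmem i p).1 hp).1)
      (fun p hp => ((hEmem k p).1 hp).1) h)
  -- row sums of B are injective
  have hrAnodup : (Multiset.map (fun i => ∑ j, A i j)
      (Finset.univ.val : Multiset (Fin n))).Nodup :=
    Finset.univ.nodup.map hrAinj
  have hrBnodup : (Multiset.map (fun i => ∑ j, B i j)
      (Finset.univ.val : Multiset (Fin n))).Nodup := by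
    rw [← hrows]; exact hrAnodup
  have hrBinj : Function.Injective (fun i => ∑ j, B i j) := by
    intro i k h
    exact Multiset.inj_on_of_nodup_map hrBnodup i (Finset.mem_univ i) k
      (Finset.mem_univ k) h
  -- define σ
  have hexσ : ∀ i : Fin n, ∃ k : Fin n, ∑ j, A k j = ∑ j, B i j := by
    intro i
    have : (∑ j, B i j) ∈ Multiset.map (fun i => ∑ j, B i j)
        (Finset.univ.val : Multiset (Fin n)) :=
      Multiset.mem_map_of_mem _ (Finset.mem_univ i)
    rw [← hrows] at this
    rcases Multiset.mem_map.1 this with ⟨k, _, hk⟩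
    exact ⟨k, hk⟩
  choose σ0 hσ0 using hexσ
  have hσ0inj : Function.Injective σ0 := by
    intro i k h
    apply hrBinj
    simp only
    rw [← hσ0 i, ← hσ0 k, h]
  -- image of incident edges under ψ
  have hEσ : ∀ i, (E i).image ψ = E (σ0 i) := by
    intro i
    apply hgen
    · intro p hp
      rcases Finset.mem_image.1 hp with ⟨q, hq, rfl⟩
      exact (hUmem _).1 (hψU q ((hUmem q).2 ((hEmem i q).1 hq).1))
    · intro p hp; exact ((hEmem _ p).1 hp).1
    · rw [Finset.sum_image (fun p hp q hq h =>
        hψinj p ((hUmem p).2 ((hEmem i p).1 hp).1)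
          q ((hUmem q).2 ((hEmem i q).1 hq).1) h)]
      calc ∑ p ∈ E i, A (ψ p).1 (ψ p).2
          = ∑ p ∈ E i, B p.1 p.2 :=
            Finset.sum_congr rfl (fun p hp =>
              hψA p ((hUmem p).2 ((hEmem i p).1 hp).1))
        _ = ∑ j, B i j := (hrowB i).symm
        _ = ∑ j, A (σ0 i) j := (hσ0 i).symm
        _ = ∑ p ∈ E (σ0 i), A p.1 p.2 := hrowA (σ0 i)
  -- entrywise identity
  have hBA : ∀ i j, B i j = A (σ0 i) (σ0 j) := by
    intro i j
    rcases eq_or_ne i j with rfl | hij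
    · rw [hBdiag, hAdiag]
    · set p : Fin n × Fin n := if i < j then (i, j) else (j, i) with hp
      have hBp : B p.1 p.2 = B i j := by
        rcases lt_or_gt_of_ne hij with h | h
        · rw [hp, if_pos h]
        · rw [hp, if_neg (not_lt.2 h.le)]; exact hBs j i
      have hpEi : p ∈ E i := by
        rcases lt_or_gt_of_ne hij with h | h
        · rw [hp, if_pos h]; exact (hEmem i _).2 ⟨h, Or.inl rfl⟩
        · rw [hp, if_neg (not_lt.2 h.le)]; exact (hEmem i _).2 ⟨h, Or.inr rfl⟩
      have hpEj : p ∈ E j := by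
        rcases lt_or_gt_of_ne hij with h | h
        · rw [hp, if_pos h]; exact (hEmem j _).2 ⟨h, Or.inr rfl⟩
        · rw [hp, if_neg (not_lt.2 h.le)]; exact (hEmem j _).2 ⟨h, Or.inl rfl⟩
      have hqU : p ∈ U := (hUmem p).2 ((hEmem i p).1 hpEi).1
      have hq1 : ψ p ∈ E (σ0 i) := by
        rw [← hEσ i]; exact Finset.mem_image_of_mem ψ hpEi
      have hq2 : ψ p ∈ E (σ0 j) := by
        rw [← hEσ j]; exact Finset.mem_image_of_mem ψ hpEj
      have hσne : σ0 i ≠ σ0 j := fun h => hij (hσ0inj h)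
      have hval : A (ψ p).1 (ψ p).2 = B i j := by rw [hψA p hqU, hBp]
      rcases ((hEmem _ _).1 hq1).2 with h1 | h1 <;>
        rcases ((hEmem _ _).1 hq2).2 with h2 | h2
      · exact absurd (h1 ▸ h2 : σ0 i = σ0 j) hσne
      · rw [← h1, ← h2]; exact hval.symm
      · rw [← h1, ← h2, hAs]; exact hval.symm
      · exact absurd (h1 ▸ h2 : σ0 i = σ0 j) hσne
  -- assemble
  refine ⟨Equiv.ofBijective σ0 ((Finite.injective_iff_bijective).1 hσ0inj), ?_⟩
  ext i j
  rw [Equiv.Perm.permMatrix, ← PEquiv.toMatrix_symm, ← Equiv.toPEquiv_symm,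
    PEquiv.toMatrix_toPEquiv_mul, PEquiv.mul_toMatrix_toPEquiv]
  simp only [Matrix.submatrix_apply, Equiv.symm_symm, id_eq]
  exact hBA i j
end

section
/- Let Ψ: ℝ^n → ℝ^n be a permutation-invariant map that separates S_n-orbits (Ψ(x)=Ψ(y) implies y is a permutation of x). Let X, Y ∈ ℝ^{d×n} with columns not related by a common permutation (X ≠ YPᵀ for every permutation matrix P). Then the set of vectors w ∈ ℝ^d for which Xᵀw is a permutation of Yᵀw is contained in a finite union of hyperplanes, hence has Lebesgue measure zero in ℝ^d; consequently for almost every w ∈ ℝ^d, Ψ(Xᵀw) ≠ Ψ(Yᵀw). -/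
open Matrix MeasureTheory

lemma hyperplane_null (d : ℕ) (c : Fin d → ℝ) (hc : c ≠ 0) :
    volume {w : Fin d → ℝ | ∑ a, c a * w a = 0} = 0 := by
  let φ : (Fin d → ℝ) →ₗ[ℝ] ℝ :=
    { toFun := fun w => ∑ a, c a * w a
      map_add' := by intro x y; simp [mul_add, Finset.sum_add_distrib]
      map_smul' := by intro r x; simp [Finset.mul_sum, mul_left_comm] }
  have hker : {w : Fin d → ℝ | ∑ a, c a * w a = 0} = (LinearMap.ker φ : Set (Fin d → ℝ)) := rfl
  rw [hker]
  apply Measure.addHaar_submodule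
  intro htop
  have hφ : φ = 0 := LinearMap.ker_eq_top.mp htop
  obtain ⟨a, ha⟩ := Function.ne_iff.mp hc
  have : φ (Pi.single a 1) = 0 := by rw [hφ]; rfl
  simp [φ, Pi.single_apply, Finset.sum_ite_eq'] at this
  exact ha this

theorem stmt17 (d n : ℕ)
    (Ψ : (Fin n → ℝ) → (Fin n → ℝ))
    (hΨinv : ∀ (σ : Equiv.Perm (Fin n)) (x : Fin n → ℝ), Ψ (x ∘ σ) = Ψ x)
    (hΨsep : ∀ x y : Fin n → ℝ, Ψ x = Ψ y → ∃ σ : Equiv.Perm (Fin n), y = x ∘ σ)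
    (X Y : Matrix (Fin d) (Fin n) ℝ)
    (hnot : ¬ ∃ σ : Equiv.Perm (Fin n), X = Y * (σ.permMatrix ℝ)ᵀ) :
    (∃ (k : ℕ) (c : Fin k → (Fin d → ℝ)), (∀ i, c i ≠ 0) ∧
      {w : Fin d → ℝ | ∃ σ : Equiv.Perm (Fin n), Xᵀ.mulVec w ∘ σ = Yᵀ.mulVec w} ⊆
        ⋃ i, {w : Fin d → ℝ | ∑ a, c i a * w a = 0}) ∧
    volume {w : Fin d → ℝ | ∃ σ : Equiv.Perm (Fin n), Xᵀ.mulVec w ∘ σ = Yᵀ.mulVec w} = 0 ∧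
    ∀ᵐ w : Fin d → ℝ, Ψ (Xᵀ.mulVec w) ≠ Ψ (Yᵀ.mulVec w) := by
  push_neg at hnot
  -- for each permutation τ, there is a column index j with nonzero difference
  have key : ∀ τ : Equiv.Perm (Fin n), ∃ j : Fin n,
      (fun a => X a (τ j) - Y a j) ≠ 0 := by
    intro τ
    have h := hnot τ⁻¹
    by_contra hcon
    push_neg at hcon
    apply h
    ext a b
    have := hcon (τ⁻¹ b)
    have h2 : X a (τ (τ⁻¹ b)) - Y a (τ⁻¹ b) = 0 := congrFun this a
    simp only [Equiv.Perm.coe_inv, Equiv.apply_symm_apply] at h2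
    simp [Matrix.mul_apply, Equiv.Perm.permMatrix, PEquiv.toMatrix_apply,
      Equiv.toPEquiv_apply, transpose_apply, Equiv.apply_eq_iff_eq_symm_apply]
    linarith
  choose jj hjj using key
  set S := {w : Fin d → ℝ | ∃ σ : Equiv.Perm (Fin n), Xᵀ.mulVec w ∘ σ = Yᵀ.mulVec w} with hS
  set k := Fintype.card (Equiv.Perm (Fin n)) with hk
  let e : Fin k ≃ Equiv.Perm (Fin n) := (Fintype.equivFin _).symm
  let c : Fin k → (Fin d → ℝ) := fun i a => X a (e i (jj (e i))) - Y a (jj (e i))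
  have hsub : S ⊆ ⋃ i, {w : Fin d → ℝ | ∑ a, c i a * w a = 0} := by
    intro w ⟨τ, hτ⟩
    refine Set.mem_iUnion.mpr ⟨e.symm τ, ?_⟩
    have hτ' : ∀ j, ∑ a, X a (τ j) * w a = ∑ a, Y a j * w a := by
      intro j
      have := congrFun hτ j
      simpa [Matrix.mulVec, dotProduct, transpose_apply] using this
    simp only [Set.mem_setOf_eq, c, e.apply_symm_apply]
    simp only [sub_mul, Finset.sum_sub_distrib]
    rw [hτ' (jj τ)]
    ring
  have hnull : volume S = 0 := by
    apply measure_mono_null hsub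
    apply measure_iUnion_null
    intro i
    exact hyperplane_null d (c i) (hjj (e i))
  refine ⟨⟨k, c, fun i => hjj (e i), hsub⟩, hnull, ?_⟩
  rw [MeasureTheory.ae_iff]
  apply measure_mono_null _ hnull
  intro w hw
  simp only [Set.mem_setOf_eq, not_not] at hw
  obtain ⟨σ, hσ⟩ := hΨsep _ _ hw
  exact ⟨σ, hσ.symm⟩
end

section
/- Let M be a topological space, G a group acting on M, K ⊆ M compact, and f_inv: M → ℝ^N a continuous G-invariant map that separates orbits (f_inv(x) = f_inv(y) implies x = g·y for some g ∈ G). Then for every continuous G-invariant function f: M → ℝ there exists a continuous function h: ℝ^N → ℝ such that f(x) = h(f_inv(x)) for all x ∈ K. -/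
theorem stmt18 {M : Type*} [TopologicalSpace M] {G : Type*} [Group G] [MulAction G M]
    (K : Set M) (hK : IsCompact K) (N : ℕ)
    (finv : M → (Fin N → ℝ)) (hfinv_cont : Continuous finv)
    (hfinv_inv : ∀ (g : G) (x : M), finv (g • x) = finv x)
    (hfinv_sep : ∀ x y : M, finv x = finv y → ∃ g : G, x = g • y)
    (f : M → ℝ) (hf_cont : Continuous f)
    (hf_inv : ∀ (g : G) (x : M), f (g • x) = f x) :
    ∃ h : (Fin N → ℝ) → ℝ, Continuous h ∧ ∀ x ∈ K, f x = h (finv x) := by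
  -- the compact image
  set S : Set (Fin N → ℝ) := finv '' K with hS
  have hScompact : IsCompact S := hK.image hfinv_cont
  have hSclosed : IsClosed S := hScompact.isClosed
  haveI : CompactSpace K := isCompact_iff_compactSpace.mp hK
  -- the map from K onto S
  let φ : K → S := fun x => ⟨finv x, ⟨x.1, x.2, rfl⟩⟩
  have hφcont : Continuous φ :=
    Continuous.subtype_mk (hfinv_cont.comp continuous_subtype_val) _
  have hφsurj : Function.Surjective φ := by
    rintro ⟨z, x, hxK, rfl⟩
    exact ⟨⟨x, hxK⟩, rfl⟩
  have hφquot : Topology.IsQuotientMap φ :=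
    (hφcont.isClosedMap).isQuotientMap hφcont hφsurj
  -- define g on S
  have hex : ∀ z : S, ∃ x : M, x ∈ K ∧ finv x = z := by
    rintro ⟨z, x, hxK, rfl⟩; exact ⟨x, hxK, rfl⟩
  choose w hwK hwz using hex
  let g : S → ℝ := fun z => f (w z)
  have key : ∀ x : M, ∀ z : S, finv x = (z : Fin N → ℝ) → f x = g z := by
    intro x z hz
    obtain ⟨gg, hgg⟩ := hfinv_sep x (w z) (by rw [hz, hwz z])
    rw [hgg, hf_inv]
  have hgφ : ∀ x : K, g (φ x) = f x :=
    fun x => (key x.1 (φ x) rfl).symm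
  have hgcont : Continuous g := by
    rw [hφquot.continuous_iff]
    have : (g ∘ φ) = fun x : K => f x := funext hgφ
    rw [this]
    exact hf_cont.comp continuous_subtype_val
  -- Tietze extension
  obtain ⟨h, hh⟩ := ContinuousMap.exists_restrict_eq hSclosed ⟨g, hgcont⟩
  refine ⟨h, h.continuous, fun x hx => ?_⟩
  have hz : finv x ∈ S := ⟨x, hx, rfl⟩
  have := congrFun (congrArg DFunLike.coe hh) ⟨finv x, hz⟩
  simp only [ContinuousMap.restrict_apply, ContinuousMap.coe_mk] at this
  rw [key x ⟨finv x, hz⟩ rfl]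
  exact this.symm
end
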